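/- Let V : (0,∞) → (0,∞) be real-analytic and multiplicatively periodic with some period λ > 1 (i.e., V(λx) = V(x) for all x > 0), and let γ > 0. Suppose B is a dense subset of [1,∞) such that for every b ∈ B, liminf_{ε→0} (V(ε/b)·b^γ − V(ε)) ≥ 0. Then for any b₀ > 1, inf over ε > 0 and b ≥ b₀ of (V(ε/b)·b^γ − V(ε)) is strictly positive. -/

import Mathlib

open Filter Set Real

-- Real.log is ℝ-analytic at positive points
lemma aux_log_analytic {x : ℝ} (hx : 0 < x) : AnalyticAt ℝ Real.log x := by
  have h1 : AnalyticAt ℝ (fun y : ℝ => (Complex.log (y:ℂ)).re) x := by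
    have hof : AnalyticAt ℝ (fun y : ℝ => (y : ℂ)) x := Complex.ofRealCLM.analyticAt x
    have hlog : AnalyticAt ℝ Complex.log ((fun y : ℝ => (y : ℂ)) x) :=
      (analyticAt_clog (Complex.ofReal_mem_slitPlane.mpr hx)).restrictScalars
    have hre : AnalyticAt ℝ (fun z : ℂ => z.re)
        ((Complex.log ∘ fun y : ℝ => (y : ℂ)) x) := Complex.reCLM.analyticAt _
    exact hre.comp (hlog.comp hof)
  have : (fun y : ℝ => (Complex.log (y:ℂ)).re) = Real.log := by
    funext y; exact Complex.log_ofReal_re y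
  rwa [this] at h1

-- integer-power periodicity
lemma aux_per (V : ℝ → ℝ) (lam : ℝ) (hlam : 1 < lam)
    (hper : ∀ x > 0, V (lam * x) = V x) :
    ∀ (n : ℤ) (x : ℝ), 0 < x → V (lam ^ n * x) = V x := by
  have hl0 : (0:ℝ) < lam := lt_trans one_pos hlam
  intro n
  induction n using Int.induction_on with
  | zero => intro x hx; simp
  | succ k ih =>
      intro x hx
      have h : (lam:ℝ) ^ ((k:ℤ)+1) * x = lam * (lam ^ (k:ℤ) * x) := by
        rw [zpow_add_one₀ (ne_of_gt hl0)]; ring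
      rw [h, hper _ (by positivity), ih x hx]
  | pred k ih =>
      intro x hx
      have h1 : V (lam ^ (-(k:ℤ)-1) * x) = V (lam * (lam ^ (-(k:ℤ)-1) * x)) :=
        (hper _ (by positivity)).symm
      have h2 : lam * (lam ^ (-(k:ℤ)-1) * x) = lam ^ (-(k:ℤ)) * x := by
        rw [show (-(k:ℤ)) = (-(k:ℤ)-1)+1 by ring, zpow_add_one₀ (ne_of_gt hl0)]; ring
      rw [h1, h2, ih x hx]

/-- Lemma 2 of the paper: if `V` is real-analytic on `(0,∞)`, positive, multiplicatively
periodic with period `λ > 1`, and `liminf_{ε→0} (V(ε/b) b^γ − V(ε)) ≥ 0` for all `b` in a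
dense subset `B` of `[1,∞)`, then for any `b₀ > 1` the infimum of `V(ε/b) b^γ − V(ε)` over
`ε > 0` and `b ≥ b₀` is strictly positive. -/
theorem stmt2 (V : ℝ → ℝ) (lam γ : ℝ) (hlam : 1 < lam)
    (hVpos : ∀ x > 0, 0 < V x)
    (hVan : AnalyticOnNhd ℝ V (Set.Ioi 0))
    (hper : ∀ x > 0, V (lam * x) = V x)
    (hγ : 0 < γ)
    (B : Set ℝ) (hB : B ⊆ Set.Ici 1) (hBdense : Set.Ici (1:ℝ) ⊆ closure B)
    (hliminf : ∀ b ∈ B,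
      0 ≤ Filter.liminf (fun ε => V (ε / b) * b ^ γ - V ε) (nhdsWithin 0 (Set.Ioi 0)))
    (b₀ : ℝ) (hb₀ : 1 < b₀) :
    ∃ C > 0, ∀ ε > 0, ∀ b ≥ b₀, C ≤ V (ε / b) * b ^ γ - V ε := by
  have hl0 : (0:ℝ) < lam := lt_trans one_pos hlam
  have hVz := aux_per V lam hlam hper
  have hIcc : Icc (1:ℝ) lam ⊆ Ioi 0 := fun x hx => lt_of_lt_of_le one_pos hx.1
  -- continuity of V at positive points
  have hVc : ∀ x : ℝ, 0 < x → ContinuousAt V x := fun x hx => (hVan x hx).continuousAt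
  -- global upper bound for V
  obtain ⟨xM, hxM, hMmax⟩ := isCompact_Icc.exists_isMaxOn (nonempty_Icc.mpr hlam.le)
    (hVan.continuousOn.mono hIcc)
  set M := V xM with hMdef
  have hMbd : ∀ x : ℝ, 0 < x → V x ≤ M := by
    intro x hx
    obtain ⟨n, hn⟩ := exists_mem_Ico_zpow hx hlam
    have hlnpos : (0:ℝ) < lam ^ n := zpow_pos hl0 n
    have hy : x / lam ^ n ∈ Icc (1:ℝ) lam := by
      constructor
      · rw [le_div_iff₀ hlnpos]; simpa using hn.1
      · rw [div_le_iff₀ hlnpos]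
        have := hn.2
        rw [zpow_add_one₀ (ne_of_gt hl0)] at this
        linarith [this]
    have hxeq : lam ^ n * (x / lam ^ n) = x := by field_simp
    have := isMaxOn_iff.mp hMmax _ hy
    calc V x = V (lam ^ n * (x / lam ^ n)) := by rw [hxeq]
    _ = V (x / lam ^ n) := hVz n _ (by positivity)
    _ ≤ M := this
  -- Step A: pointwise nonnegativity for b ∈ B
  have stepA : ∀ b ∈ B, ∀ ε > 0, 0 ≤ V (ε / b) * b ^ γ - V ε := by
    intro b hbB ε hε
    have hb1 : (1:ℝ) ≤ b := hB hbB
    have hbpos : (0:ℝ) < b := lt_of_lt_of_le one_pos hb1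
    set g : ℝ → ℝ := fun y => V (y / b) * b ^ γ - V y with hg
    -- the sequence ε / lam ^ n tends to 0 within Ioi 0
    have htend : Tendsto (fun n : ℕ => ε / lam ^ n) atTop (nhdsWithin 0 (Ioi 0)) := by
      rw [tendsto_nhdsWithin_iff]
      constructor
      · have h0 : Tendsto (fun n : ℕ => ε * (lam⁻¹) ^ n) atTop (nhds (ε * 0)) :=
          (tendsto_pow_atTop_nhds_zero_of_lt_one (inv_nonneg.mpr hl0.le)
            (by rw [inv_lt_one₀ hl0]; exact hlam)).const_mul ε
        rw [mul_zero] at h0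
        convert h0 using 2 with n
        rw [div_eq_mul_inv, inv_pow]
      · exact Eventually.of_forall (fun n => mem_Ioi.mpr (by positivity))
    have hgper : ∀ n : ℕ, g (ε / lam ^ n) = g ε := by
      intro n
      have h1 : ε / lam ^ n = lam ^ (-(n:ℤ)) * ε := by
        rw [zpow_neg, zpow_natCast]; field_simp
      have h2 : ε / lam ^ n / b = lam ^ (-(n:ℤ)) * (ε / b) := by
        rw [h1]; ring
      simp only [hg, h1, mul_div_assoc, hVz (-(n:ℤ)) ε hε, hVz (-(n:ℤ)) (ε/b) (by positivity)]
    have hfreq : ∃ᶠ y in nhdsWithin 0 (Ioi 0), g y ≤ g ε :=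
      htend.frequently (Frequently.of_forall (fun n => le_of_eq (hgper n)))
    have hbdd : (nhdsWithin (0:ℝ) (Ioi 0)).IsBoundedUnder (· ≥ ·) g := by
      refine ⟨-M, ?_⟩
      rw [Filter.eventually_map]
      have hmem : Ioi (0:ℝ) ∈ nhdsWithin (0:ℝ) (Ioi 0) := self_mem_nhdsWithin
      filter_upwards [hmem] with y hy
      have h1 : 0 ≤ V (y / b) * b ^ γ :=
        mul_nonneg (le_of_lt (hVpos _ (div_pos (mem_Ioi.mp hy) hbpos))) (le_of_lt (rpow_pos_of_pos hbpos γ))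
      have h2 : V y ≤ M := hMbd y (mem_Ioi.mp hy)
      simp only [hg, ge_iff_le]
      linarith
    calc (0:ℝ) ≤ liminf g (nhdsWithin 0 (Ioi 0)) := hliminf b hbB
    _ ≤ g ε := liminf_le_of_frequently_le hfreq hbdd
  -- Step B: pointwise nonnegativity for all b ≥ 1
  have stepB : ∀ b ≥ (1:ℝ), ∀ ε > 0, 0 ≤ V (ε / b) * b ^ γ - V ε := by
    intro b hb1 ε hε
    have hbpos : (0:ℝ) < b := lt_of_lt_of_le one_pos hb1
    have hbcl : b ∈ closure B := hBdense hb1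
    obtain ⟨u, huB, hulim⟩ := mem_closure_iff_seq_limit.mp hbcl
    have hcont : ContinuousAt (fun t : ℝ => V (ε / t) * t ^ γ - V ε) b := by
      have h1 : ContinuousAt (fun t : ℝ => ε / t) b :=
        continuousAt_const.div continuousAt_id (ne_of_gt hbpos)
      have h2 : ContinuousAt V (ε / b) := hVc _ (by positivity)
      have h3 : ContinuousAt (fun t : ℝ => t ^ γ) b :=
        Real.continuousAt_rpow_const b γ (Or.inl (ne_of_gt hbpos))
      exact ((h2.comp h1).mul h3).sub continuousAt_const
    have hlim : Tendsto (fun n => V (ε / u n) * (u n) ^ γ - V ε) atTop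
        (nhds (V (ε / b) * b ^ γ - V ε)) := hcont.tendsto.comp hulim
    refine ge_of_tendsto hlim (Eventually.of_forall (fun n => ?_))
    exact stepA (u n) (huB n) ε hε
  -- W := V x / x^γ is nonincreasing
  have hW : ∀ x y : ℝ, 0 < x → x ≤ y → V y / y ^ γ ≤ V x / x ^ γ := by
    intro x y hx hxy
    have hy : (0:ℝ) < y := lt_of_lt_of_le hx hxy
    have hb1 : (1:ℝ) ≤ y / x := (one_le_div hx).mpr hxy
    have h := stepB (y / x) hb1 y hy
    have hyx : y / (y / x) = x := by field_simp
    rw [hyx] at h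
    have hpow : (y / x) ^ γ = y ^ γ / x ^ γ := Real.div_rpow (le_of_lt hy) (le_of_lt hx) γ
    rw [hpow] at h
    have hxγ : (0:ℝ) < x ^ γ := rpow_pos_of_pos hx γ
    have hyγ : (0:ℝ) < y ^ γ := rpow_pos_of_pos hy γ
    rw [div_le_div_iff₀ hyγ hxγ]
    have h' : V y ≤ V x * (y ^ γ / x ^ γ) := by linarith
    rw [← mul_div_assoc] at h'
    have h'' := mul_le_mul_of_nonneg_right h' hxγ.le
    rwa [div_mul_cancel₀ _ (ne_of_gt hxγ)] at h''
  -- minimum of g₀ over a period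
  have hb₀pos : (0:ℝ) < b₀ := lt_trans one_pos hb₀
  set g₀ : ℝ → ℝ := fun x => V (x / b₀) * b₀ ^ γ - V x with hg₀
  have hg₀cont : ContinuousOn g₀ (Icc 1 lam) := by
    intro x hx
    have hx0 : (0:ℝ) < x := hIcc hx
    have h1 : ContinuousAt (fun t : ℝ => t / b₀) x :=
      continuousAt_id.div continuousAt_const (ne_of_gt hb₀pos)
    have h2 : ContinuousAt V (x / b₀) := hVc _ (by positivity)
    have hcomp : ContinuousAt (fun t : ℝ => V (t / b₀)) x := ContinuousAt.comp h2 h1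
    exact ((hcomp.mul continuousAt_const).sub (hVc _ hx0)).continuousWithinAt
  obtain ⟨ε₁, hε₁mem, hmin⟩ := isCompact_Icc.exists_isMinOn (nonempty_Icc.mpr hlam.le) hg₀cont
  have hε₁pos : (0:ℝ) < ε₁ := hIcc hε₁mem
  -- g₀ is periodic under multiplication by lam ^ n
  have hg₀per : ∀ (n : ℤ) (x : ℝ), 0 < x → g₀ (lam ^ n * x) = g₀ x := by
    intro n x hx
    simp only [hg₀, mul_div_assoc, hVz n x hx, hVz n (x / b₀) (by positivity)]
  -- g₀ is bounded below by its minimum on [1, lam]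
  have hg₀lb : ∀ ε > 0, g₀ ε₁ ≤ g₀ ε := by
    intro ε hε
    obtain ⟨n, hn⟩ := exists_mem_Ico_zpow hε hlam
    have hlnpos : (0:ℝ) < lam ^ n := zpow_pos hl0 n
    have hy : ε / lam ^ n ∈ Icc (1:ℝ) lam := by
      constructor
      · rw [le_div_iff₀ hlnpos]; simpa using hn.1
      · rw [div_le_iff₀ hlnpos]
        have := hn.2
        rw [zpow_add_one₀ (ne_of_gt hl0)] at this
        linarith [this]
    have hxeq : lam ^ n * (ε / lam ^ n) = ε := by field_simp
    calc g₀ ε₁ ≤ g₀ (ε / lam ^ n) := isMinOn_iff.mp hmin _ hy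
    _ = g₀ (lam ^ n * (ε / lam ^ n)) := (hg₀per n _ (by positivity)).symm
    _ = g₀ ε := by rw [hxeq]
  set C := g₀ ε₁ with hC
  have hC0 : 0 ≤ C := stepB b₀ hb₀.le ε₁ hε₁pos
  have hCpos : 0 < C := by
    rcases hC0.lt_or_eq with hlt | heq0
    · exact hlt
    exfalso
    have hCz : g₀ ε₁ = 0 := heq0.symm
    have hapos : (0:ℝ) < ε₁ / b₀ := by positivity
    have halt : ε₁ / b₀ < ε₁ := by
      rw [div_lt_iff₀ hb₀pos]; nlinarith
    have hcpos : (0:ℝ) < V ε₁ / ε₁ ^ γ :=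
      div_pos (hVpos _ hε₁pos) (rpow_pos_of_pos hε₁pos γ)
    set c := V ε₁ / ε₁ ^ γ with hc
    -- W (ε₁ / b₀) = c
    have hWa : V (ε₁ / b₀) / (ε₁ / b₀) ^ γ = c := by
      have h0 : V (ε₁ / b₀) * b₀ ^ γ = V ε₁ := by
        simp only [hg₀] at hCz; linarith
      rw [hc, ← h0, Real.div_rpow hε₁pos.le hb₀pos.le, div_div_eq_mul_div]
    -- W is constant equal to c on [ε₁ / b₀, ε₁]
    have hWconst : ∀ x ∈ Icc (ε₁ / b₀) ε₁, V x / x ^ γ = c := by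
      intro x hx
      have hx0 : 0 < x := lt_of_lt_of_le hapos hx.1
      have h1 : V x / x ^ γ ≤ c := by rw [← hWa]; exact hW _ _ hapos hx.1
      have h2 : c ≤ V x / x ^ γ := by rw [hc]; exact hW _ _ hx0 hx.2
      linarith
    -- identity theorem
    set G : ℝ → ℝ := fun x => c * Real.exp (Real.log x * γ) with hG
    have hGan : AnalyticOnNhd ℝ G (Ioi 0) := by
      intro x hx
      exact analyticAt_const.mul
        (analyticAt_rexp.comp ((aux_log_analytic hx).mul analyticAt_const))
    set z₀ : ℝ := (ε₁ / b₀ + ε₁) / 2 with hz₀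
    have hz₀mem : z₀ ∈ Ioo (ε₁ / b₀) ε₁ := ⟨by rw [hz₀]; linarith, by rw [hz₀]; linarith⟩
    have hz₀pos : 0 < z₀ := lt_trans hapos hz₀mem.1
    have hev : V =ᶠ[nhds z₀] G := by
      filter_upwards [isOpen_Ioo.mem_nhds hz₀mem] with x hx
      have hx0 : 0 < x := lt_trans hapos hx.1
      have := hWconst x ⟨hx.1.le, hx.2.le⟩
      have hxγ : (0:ℝ) < x ^ γ := rpow_pos_of_pos hx0 γ
      have hVx : V x = c * x ^ γ := by
        field_simp at this; linarith [this]
      rw [hVx, hG, Real.rpow_def_of_pos hx0]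
    have heqOn : EqOn V G (Ioi 0) :=
      hVan.eqOn_of_preconnected_of_eventuallyEq hGan isPreconnected_Ioi
        (mem_Ioi.mpr hz₀pos) hev
    -- contradiction with periodicity
    have h1 : V (lam * ε₁) = V ε₁ := hper ε₁ hε₁pos
    have h2 : G (lam * ε₁) = G ε₁ := by
      rw [← heqOn (mem_Ioi.mpr (by positivity)), ← heqOn (mem_Ioi.mpr hε₁pos), h1]
    simp only [hG] at h2
    have h3 : Real.exp (Real.log (lam * ε₁) * γ) = Real.exp (Real.log ε₁ * γ) :=
      mul_left_cancel₀ (ne_of_gt hcpos) h2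
    have h4 : Real.log (lam * ε₁) * γ = Real.log ε₁ * γ := Real.exp_injective h3
    have h5 : Real.log (lam * ε₁) = Real.log ε₁ :=
      mul_right_cancel₀ (ne_of_gt hγ) h4
    rw [Real.log_mul (ne_of_gt hl0) (ne_of_gt hε₁pos)] at h5
    have h6 : Real.log lam = 0 := by linarith
    have := Real.log_pos hlam
    linarith
  -- final assembly
  refine ⟨C, hCpos, ?_⟩
  intro ε hε b hb
  have hbpos : (0:ℝ) < b := lt_of_lt_of_le hb₀pos hb
  have hεb : (0:ℝ) < ε / b := by positivity
  have hle : ε / b ≤ ε / b₀ := div_le_div_of_nonneg_left hε.le hb₀pos hb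
  have hmon := hW _ _ hεb hle
  rw [Real.div_rpow hε.le hbpos.le, Real.div_rpow hε.le hb₀pos.le,
    div_div_eq_mul_div, div_div_eq_mul_div] at hmon
  have hεγ : (0:ℝ) < ε ^ γ := rpow_pos_of_pos hε γ
  have h1 : V (ε / b₀) * b₀ ^ γ ≤ V (ε / b) * b ^ γ := by
    have h := mul_le_mul_of_nonneg_right hmon hεγ.le
    rwa [div_mul_cancel₀ _ (ne_of_gt hεγ), div_mul_cancel₀ _ (ne_of_gt hεγ)] at h
  have h2 : C ≤ g₀ ε := hg₀lb ε hε
  simp only [hg₀] at h2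
  linarith
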